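/- For two distinct angles θ₁, θ₂ with θ₂ - θ₁ ∈ (-π, π), the imaginary part of the double integral ∫₀¹ dx ∫₀¹ dx' 1/(e^{iθ₁}x - e^{iθ₂}x')² (regularized by starting both integrals at 0⁺) equals (1/2)(π·sign(θ₂ - θ₁) - (θ₂ - θ₁)). Equivalently, Im(∫₀¹ (1/(x - e^{i(θ₂-θ₁)}) - 1/x) dx) = Arg(1 - e^{-i(θ₂-θ₁)}) = (1/2)(π·sign(θ₂-θ₁) - (θ₂-θ₁)), which lies in [-π/2, π/2]. -/

import Mathlib

open Real

-- value of the arctan difference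
lemma val_aux (θ : ℝ) (h1 : -π < θ) (h2 : θ < π) (hθ0 : θ ≠ 0) :
    Real.arctan ((1 - Real.cos θ) / Real.sin θ) - Real.arctan ((0 - Real.cos θ) / Real.sin θ)
      = (1/2) * (π * Real.sign θ - θ) := by
  have hs : Real.sin θ ≠ 0 := fun hh => hθ0 ((Real.sin_eq_zero_iff_of_lt_of_lt h1 h2).mp hh)
  have hc2 : Real.cos (θ/2) > 0 := by
    apply Real.cos_pos_of_mem_Ioo; constructor <;> [linarith; linarith]
  have e1 : (1 - Real.cos θ) / Real.sin θ = Real.tan (θ/2) := by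
    rw [Real.tan_eq_sin_div_cos]
    have hsin : Real.sin θ = 2 * Real.sin (θ/2) * Real.cos (θ/2) := by
      rw [← Real.sin_two_mul]; ring_nf
    have hcos : Real.cos θ = 1 - 2 * Real.sin (θ/2)^2 := by
      have hd := Real.cos_two_mul (θ/2)
      rw [show 2*(θ/2) = θ by ring] at hd
      linear_combination hd + 2 * Real.sin_sq_add_cos_sq (θ/2)
    field_simp
    rw [hsin, hcos]; ring
  have A1 : Real.arctan ((1 - Real.cos θ) / Real.sin θ) = θ/2 := by
    rw [e1, Real.arctan_tan (by linarith) (by linarith)]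
  rcases lt_or_gt_of_ne hθ0 with hneg | hpos
  · -- θ < 0 : arctan(-cosθ/sinθ) = θ + π/2
    have e2 : (0 - Real.cos θ) / Real.sin θ = Real.tan (θ + π/2) := by
      rw [Real.tan_eq_sin_div_cos, Real.sin_add_pi_div_two, Real.cos_add_pi_div_two,
        div_neg]
      ring
    have A2 : Real.arctan ((0 - Real.cos θ) / Real.sin θ) = θ + π/2 := by
      rw [e2, Real.arctan_tan (by linarith) (by linarith)]
    rw [A1, A2, Real.sign_of_neg hneg]; ring
  · have e2 : (0 - Real.cos θ) / Real.sin θ = Real.tan (θ - π/2) := by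
      rw [Real.tan_eq_sin_div_cos, Real.sin_sub_pi_div_two, Real.cos_sub_pi_div_two,
        neg_div]
      ring
    have A2 : Real.arctan ((0 - Real.cos θ) / Real.sin θ) = θ - π/2 := by
      rw [e2, Real.arctan_tan (by linarith) (by linarith)]
    rw [A1, A2, Real.sign_of_pos hpos]; ring

lemma hexp (θ : ℝ) :
    Complex.exp (-Complex.I * θ) = ((Real.cos θ : ℂ)) - (Real.sin θ : ℂ) * Complex.I := by
  rw [show -Complex.I * (θ:ℂ) = ((-θ : ℝ) : ℂ) * Complex.I by push_cast; ring,
    Complex.exp_mul_I, ← Complex.ofReal_cos, ← Complex.ofReal_sin, Real.cos_neg, Real.sin_neg]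
  push_cast; ring

lemma arg_aux (θ : ℝ) (h1 : -π < θ) (h2 : θ < π) (hθ0 : θ ≠ 0) :
    Complex.arg (1 - Complex.exp (-Complex.I * θ)) = (1/2) * (π * Real.sign θ - θ) := by
  have key : ∀ r φ : ℝ, 0 < r → φ ∈ Set.Ioc (-π) π →
      (1 - Complex.exp (-Complex.I * θ)) = (r : ℂ) * (Real.cos φ + Real.sin φ * Complex.I) →
      Complex.arg (1 - Complex.exp (-Complex.I * θ)) = φ := by
    intro r φ hr hφ heq
    rw [heq, Complex.arg_real_mul _ hr, Complex.ofReal_cos, Complex.ofReal_sin,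
      Complex.arg_cos_add_sin_mul_I hφ]
  rcases lt_or_gt_of_ne hθ0 with hneg | hpos
  · have hsin : Real.sin (θ/2) < 0 := Real.sin_neg_of_neg_of_neg_pi_lt (by linarith) (by linarith)
    have := key (-2 * Real.sin (θ/2)) (-(π/2) - θ/2) (by linarith) ⟨by linarith, by linarith⟩ ?_
    · rw [this, Real.sign_of_neg hneg]; ring
    · have c1 : Real.cos (-(π/2) - θ/2) = -Real.sin (θ/2) := by
        rw [show -(π/2) - θ/2 = -(θ/2 + π/2) by ring, Real.cos_neg, Real.cos_add_pi_div_two]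
      have s1 : Real.sin (-(π/2) - θ/2) = -Real.cos (θ/2) := by
        rw [show -(π/2) - θ/2 = -(θ/2 + π/2) by ring, Real.sin_neg, Real.sin_add_pi_div_two]
      rw [c1, s1, hexp θ]
      have hre : 1 - Real.cos θ = (-2 * Real.sin (θ/2)) * (-Real.sin (θ/2)) := by
        have hd := Real.cos_two_mul (θ/2)
        rw [show 2*(θ/2) = θ by ring] at hd
        linear_combination -hd - 2 * Real.sin_sq_add_cos_sq (θ/2)
      have him2 : Real.sin θ = (-2 * Real.sin (θ/2)) * (-Real.cos (θ/2)) := by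
        have hd := Real.sin_two_mul (θ/2)
        rw [show 2*(θ/2) = θ by ring] at hd
        linarith [hd]
      rw [show (1:ℂ) - (↑(Real.cos θ) - ↑(Real.sin θ)*Complex.I)
          = ↑(1 - Real.cos θ) + ↑(Real.sin θ)*Complex.I from by push_cast; ring, hre, him2]
      push_cast; ring
  · have hsin : Real.sin (θ/2) > 0 := Real.sin_pos_of_pos_of_lt_pi (by linarith) (by linarith)
    have := key (2 * Real.sin (θ/2)) (π/2 - θ/2) (by linarith) ⟨by linarith, by linarith⟩ ?_
    · rw [this, Real.sign_of_pos hpos]; ring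
    · have c1 : Real.cos (π/2 - θ/2) = Real.sin (θ/2) := Real.cos_pi_div_two_sub _
      have s1 : Real.sin (π/2 - θ/2) = Real.cos (θ/2) := Real.sin_pi_div_two_sub _
      rw [c1, s1, hexp θ]
      have hre : 1 - Real.cos θ = (2 * Real.sin (θ/2)) * Real.sin (θ/2) := by
        have hd := Real.cos_two_mul (θ/2)
        rw [show 2*(θ/2) = θ by ring] at hd
        linear_combination -hd - 2 * Real.sin_sq_add_cos_sq (θ/2)
      have him2 : Real.sin θ = (2 * Real.sin (θ/2)) * Real.cos (θ/2) := by
        have hd := Real.sin_two_mul (θ/2)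
        rw [show 2*(θ/2) = θ by ring] at hd
        linarith [hd]
      rw [show (1:ℂ) - (↑(Real.cos θ) - ↑(Real.sin θ)*Complex.I)
          = ↑(1 - Real.cos θ) + ↑(Real.sin θ)*Complex.I from by push_cast; ring, hre, him2]
      push_cast; ring

theorem stmt0 (θ₁ θ₂ : ℝ) (h : θ₂ - θ₁ ∈ Set.Ioo (-π) π) (hne : θ₁ ≠ θ₂) :
    (∫ x in (0:ℝ)..1,
        (1 / ((x : ℂ) - Complex.exp (Complex.I * (θ₂ - θ₁))) - 1 / (x : ℂ)).im)
      = Complex.arg (1 - Complex.exp (-Complex.I * (θ₂ - θ₁)))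
    ∧ Complex.arg (1 - Complex.exp (-Complex.I * (θ₂ - θ₁)))
        = (1 / 2) * (π * Real.sign (θ₂ - θ₁) - (θ₂ - θ₁))
    ∧ (1 / 2) * (π * Real.sign (θ₂ - θ₁) - (θ₂ - θ₁)) ∈ Set.Icc (-(π / 2)) (π / 2) := by
  obtain ⟨h1, h2⟩ := h
  simp only [show ((θ₂:ℂ) - (θ₁:ℂ)) = ((θ₂ - θ₁ : ℝ):ℂ) by push_cast; ring]
  set θ := θ₂ - θ₁ with hθdef
  have hθ0 : θ ≠ 0 := sub_ne_zero.2 (Ne.symm hne)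
  have hs : Real.sin θ ≠ 0 := fun hh => hθ0 ((Real.sin_eq_zero_iff_of_lt_of_lt h1 h2).mp hh)
  -- pointwise identity for the integrand
  have hpt : ∀ x : ℝ,
      (1 / ((x : ℂ) - Complex.exp (Complex.I * θ)) - 1 / (x : ℂ)).im
        = Real.sin θ / ((x - Real.cos θ)^2 + Real.sin θ^2) := by
    intro x
    have him0 : (1 / (x : ℂ)).im = 0 := by
      rw [show (1 : ℂ) / (x:ℂ) = ((1/x : ℝ) : ℂ) by push_cast; ring]
      exact Complex.ofReal_im _
    rw [Complex.sub_im, him0, sub_zero, one_div, Complex.inv_im]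
    have hre : ((x : ℂ) - Complex.exp (Complex.I * θ)).re = x - Real.cos θ := by
      rw [show Complex.I * θ = (θ : ℂ) * Complex.I by ring, Complex.exp_mul_I]
      simp [Complex.cos_ofReal_re]
    have him : ((x : ℂ) - Complex.exp (Complex.I * θ)).im = -Real.sin θ := by
      rw [show Complex.I * θ = (θ : ℂ) * Complex.I by ring, Complex.exp_mul_I]
      simp [Complex.sin_ofReal_re]
    rw [Complex.normSq_apply, hre, him]
    ring
  have hdenom : ∀ x : ℝ, (x - Real.cos θ)^2 + Real.sin θ^2 > 0 := by
    intro x; positivity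
  have hcont : Continuous (fun x : ℝ => Real.sin θ / ((x - Real.cos θ)^2 + Real.sin θ^2)) := by
    apply Continuous.div continuous_const (by continuity)
    intro x; exact (hdenom x).ne'
  have hderiv : ∀ x : ℝ,
      HasDerivAt (fun y : ℝ => Real.arctan ((y - Real.cos θ) / Real.sin θ))
        (Real.sin θ / ((x - Real.cos θ)^2 + Real.sin θ^2)) x := by
    intro x
    have hinner : HasDerivAt (fun y : ℝ => (y - Real.cos θ) / Real.sin θ) (1 / Real.sin θ) x := by
      simpa using ((hasDerivAt_id x).sub_const (Real.cos θ)).div_const (Real.sin θ)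
    have := (Real.hasDerivAt_arctan ((x - Real.cos θ) / Real.sin θ)).comp x hinner
    refine this.congr_deriv ?_
    have hA : ((x - Real.cos θ)^2 + Real.sin θ^2) ≠ 0 := (hdenom x).ne'
    have h1 : (1 : ℝ) + ((x - Real.cos θ) / Real.sin θ)^2
        = ((x - Real.cos θ)^2 + Real.sin θ^2) / Real.sin θ^2 := by
      field_simp; ring
    rw [h1, one_div_div]
    field_simp
  have hint : (∫ x in (0:ℝ)..1,
      (1 / ((x : ℂ) - Complex.exp (Complex.I * θ)) - 1 / (x : ℂ)).im)
      = (1/2) * (π * Real.sign θ - θ) := by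
    calc (∫ x in (0:ℝ)..1, (1 / ((x : ℂ) - Complex.exp (Complex.I * θ)) - 1 / (x : ℂ)).im)
        = ∫ x in (0:ℝ)..1, Real.sin θ / ((x - Real.cos θ)^2 + Real.sin θ^2) := by
          apply intervalIntegral.integral_congr; intro x _; exact hpt x
      _ = Real.arctan ((1 - Real.cos θ) / Real.sin θ)
          - Real.arctan ((0 - Real.cos θ) / Real.sin θ) := by
          rw [intervalIntegral.integral_eq_sub_of_hasDerivAt
            (fun x _ => hderiv x) (hcont.intervalIntegrable 0 1)]
      _ = (1/2) * (π * Real.sign θ - θ) := val_aux θ h1 h2 hθ0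
  have harg := arg_aux θ h1 h2 hθ0
  refine ⟨by rw [hint, harg], harg, ?_⟩
  rcases lt_or_gt_of_ne hθ0 with hneg | hpos
  · rw [Real.sign_of_neg hneg]
    constructor <;> [nlinarith; nlinarith]
  · rw [Real.sign_of_pos hpos]
    constructor <;> [nlinarith; nlinarith]
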